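/- Let S be an ICMOT and let (q,U) →_l (q',U') be a transition of its lazy operational semantics. Let V : C → Σ* be channel contents such that V(c) is a subword of U(c) for every c ∈ C. Then there exists V' : C → Σ* with V'(c) a subword of U'(c) for every c ∈ C, such that (q,V) →_l (q',V') is also a transition of the lazy operational semantics. -/

import Mathlib

/-- Transition labels of a channel machine: write `c!a`, read `c?a`,
emptiness test `c=∅`, and occurrence test `a∉c`. -/
inductive Label (A C : Type) : Type
  | write : C → A → Label A C
  | read  : C → A → Label A C
  | emp   : C → Label A C
  | notin : A → C → Label A C

/-- An insertion channel machine with occurrence testing (ICMOT):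
an initial state and a finite transition relation `Δ ⊆ Q × L × Q`. -/
structure ICMOT (Q A C : Type) : Type where
  init : Q
  Δ : Finset (Q × Label A C × Q)

/-- The lazy operational semantics of an ICMOT: an `L`-labelled transition
relation on configurations `(q, U)` with `U : C → List A` the channel contents. -/
inductive LazyStep {Q A C : Type} (M : ICMOT Q A C) :
    Q × (C → List A) → Label A C → Q × (C → List A) → Prop
  | write {q q' : Q} {c : C} {a : A} {U U' : C → List A} :
      (q, Label.write c a, q') ∈ M.Δ →
      U' c = U c ++ [a] → (∀ d, d ≠ c → U' d = U d) →
      LazyStep M (q, U) (Label.write c a) (q', U')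
  | read {q q' : Q} {c : C} {a : A} {U U' : C → List A} :
      (q, Label.read c a, q') ∈ M.Δ →
      U c = a :: U' c → (∀ d, d ≠ c → U' d = U d) →
      LazyStep M (q, U) (Label.read c a) (q', U')
  | readLazy {q q' : Q} {c : C} {a : A} {U : C → List A} :
      (q, Label.read c a, q') ∈ M.Δ →
      LazyStep M (q, U) (Label.read c a) (q', U)
  | emp {q q' : Q} {c : C} {U : C → List A} :
      (q, Label.emp c, q') ∈ M.Δ → U c = [] →
      LazyStep M (q, U) (Label.emp c) (q', U)
  | notin {q q' : Q} {c : C} {a : A} {U : C → List A} :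
      (q, Label.notin a c, q') ∈ M.Δ → a ∉ U c →
      LazyStep M (q, U) (Label.notin a c) (q', U)

/-- `LazyRun M σ λ σ'` : a finite run from `σ` to `σ'` along the label word `λ`. -/
inductive LazyRun {Q A C : Type} (M : ICMOT Q A C) :
    Q × (C → List A) → List (Label A C) → Q × (C → List A) → Prop
  | nil (σ : Q × (C → List A)) : LazyRun M σ [] σ
  | cons {σ τ σ' : Q × (C → List A)} {l : Label A C} {ls : List (Label A C)} :
      LazyStep M σ l τ → LazyRun M τ ls σ' → LazyRun M σ (l :: ls) σ'

/-- **Downward simulation for subword channel contents.** If `(q,U) →_l (q',U')`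
is a lazy transition and `V c` is a (scattered) subword of `U c` for every
channel `c`, then there is `V'` with `V' c` a subword of `U' c` for all `c`
such that `(q,V) →_l (q',V')` is also a lazy transition. -/
theorem stmt_6 {Q A C : Type} [Fintype Q] [Fintype A] [Fintype C]
    (M : ICMOT Q A C) (q q' : Q) (U U' V : C → List A) (l : Label A C)
    (hstep : LazyStep M (q, U) l (q', U'))
    (hsub : ∀ c : C, List.Sublist (V c) (U c)) :
    ∃ V' : C → List A, (∀ c : C, List.Sublist (V' c) (U' c)) ∧
      LazyStep M (q, V) l (q', V') := by
  classical
  cases hstep with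
  | write hΔ hc hd =>
    rename_i c a
    refine ⟨Function.update V c (V c ++ [a]), ?_, ?_⟩
    · intro d
      by_cases h : d = c
      · subst h
        simp only [Function.update_self, hc]
        exact (hsub d).append (List.Sublist.refl _)
      · rw [Function.update_of_ne h, hd d h]
        exact hsub d
    · exact LazyStep.write hΔ (Function.update_self _ _ _)
        (fun d hdc => Function.update_of_ne hdc _ _)
  | read hΔ hc hd =>
    rename_i c a
    rcases hV : V c with _ | ⟨b, t⟩
    · refine ⟨V, ?_, LazyStep.readLazy hΔ⟩
      intro d
      by_cases h : d = c
      · subst h; rw [hV]; exact List.nil_sublist _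
      · rw [hd d h]; exact hsub d
    · by_cases hab : b = a
      · subst hab
        refine ⟨Function.update V c t, ?_, ?_⟩
        · intro d
          by_cases h : d = c
          · subst h
            rw [Function.update_self]
            have := hsub d
            rw [hV, hc] at this
            exact List.cons_sublist_cons.mp this
          · rw [Function.update_of_ne h, hd d h]; exact hsub d
        · exact LazyStep.read hΔ (by rw [hV, Function.update_self])
            (fun d hdc => Function.update_of_ne hdc _ _)
      · refine ⟨V, ?_, LazyStep.readLazy hΔ⟩
        intro d
        by_cases h : d = c
        · subst h
          have := hsub d
          rw [hV, hc] at this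
          cases this with
          | cons _ h' => rw [hV]; exact h'
          | cons_cons => exact absurd rfl hab
        · rw [hd d h]; exact hsub d
  | readLazy hΔ => exact ⟨V, hsub, LazyStep.readLazy hΔ⟩
  | emp hΔ hc =>
    rename_i c
    refine ⟨V, hsub, LazyStep.emp hΔ ?_⟩
    have := hsub c
    rw [hc] at this
    exact List.sublist_nil.mp this
  | notin hΔ hc =>
    exact ⟨V, hsub, LazyStep.notin hΔ (fun h => hc ((hsub _).mem h))⟩
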